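/- Let E be a finite-dimensional real inner product space and let U, V be subspaces with U ∩ V = {0} and U + V = E. For orthonormal bases (u_1,…,u_k) of U and (v_1,…,v_m) of V, and an orthonormal basis e of E, let α = |det_e(u_1,…,u_k,v_1,…,v_m)| be the absolute value of the determinant of the concatenated family with respect to e. Then: (i) α does not depend on the choice of the orthonormal bases of U, of V, or of E; (ii) 0 < α ≤ 1; (iii) α = 1 if and only if U and V are orthogonal (⟪u,v⟫ = 0 for all u ∈ U, v ∈ V). -/

import Mathlib

open scoped RealInnerProductSpace

open Module Submodule

section AngleAux
set_option linter.unusedSectionVars false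

variable {E : Type*} [NormedAddCommGroup E] [InnerProductSpace ℝ E] [FiniteDimensional ℝ E]

private lemma abs_det_indep {ι : Type*} [Fintype ι] [DecidableEq ι]
    (e e' : OrthonormalBasis ι ℝ E) (f : ι → E) :
    |e.toBasis.det f| = |e'.toBasis.det f| := by
  have h1 : e.toBasis.toMatrix ⇑e'.toBasis * e'.toBasis.toMatrix f = e.toBasis.toMatrix f :=
    Basis.toMatrix_mul_toMatrix (b := e.toBasis) (b' := e'.toBasis) f
  have h2 : |e.toBasis.det ⇑e'| = 1 := by
    rcases e.det_to_matrix_orthonormalBasis_real e' with h | h <;> rw [h] <;> norm_num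
  rw [Basis.det_apply, Basis.det_apply, ← h1, Matrix.det_mul, abs_mul]
  have h3 : (e.toBasis.toMatrix ⇑e'.toBasis).det = e.toBasis.det ⇑e'.toBasis :=
    (Basis.det_apply _ _).symm
  rw [h3, OrthonormalBasis.coe_toBasis, h2, one_mul]

private lemma det_family_mul {ι : Type*} [Fintype ι] [DecidableEq ι]
    (b : Basis ι ℝ E) (f : ι → E) (M : Matrix ι ι ℝ) :
    b.det (fun j => ∑ i, M i j • f i) = b.det f * M.det := by
  rw [Basis.det_apply, Basis.det_apply, ← Matrix.det_mul]
  congr 1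
  ext i j
  simp only [Basis.toMatrix_apply, map_sum, map_smul, Finsupp.coe_finset_sum, Finset.sum_apply,
    Finsupp.coe_smul, Pi.smul_apply, smul_eq_mul, Matrix.mul_apply]
  exact Finset.sum_congr rfl fun p _ => mul_comm _ _

private lemma exists_transition {k : ℕ} (u u' : Fin k → E)
    (hu : Orthonormal ℝ u) (hu' : Orthonormal ℝ u')
    (hspan : span ℝ (Set.range u) = span ℝ (Set.range u')) :
    ∃ A : Matrix (Fin k) (Fin k) ℝ, |A.det| = 1 ∧ ∀ j, u' j = ∑ i, A i j • u i := by
  set U : Submodule ℝ E := span ℝ (Set.range u) with hU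
  have hmemu : ∀ i, u i ∈ U := fun i => subset_span (Set.mem_range_self i)
  have hmemu' : ∀ i, u' i ∈ U := fun i =>
    hspan.ge (subset_span (Set.mem_range_self i))
  set w : Fin k → U := fun i => ⟨u i, hmemu i⟩ with hw_def
  set w' : Fin k → U := fun i => ⟨u' i, hmemu' i⟩ with hw'_def
  have hw : Orthonormal ℝ w := by
    rw [orthonormal_iff_ite] at hu ⊢
    intro i j
    simpa [hw_def, Submodule.coe_inner] using hu i j
  have hw' : Orthonormal ℝ w' := by
    rw [orthonormal_iff_ite] at hu' ⊢
    intro i j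
    simpa [hw'_def, Submodule.coe_inner] using hu' i j
  have hsp : span ℝ (Set.range w) = ⊤ := by
    apply Submodule.map_injective_of_injective U.injective_subtype
    rw [Submodule.map_span, Submodule.map_top, Submodule.range_subtype, ← Set.range_comp]
    show span ℝ (Set.range u) = U
    exact hU.symm
  have hsp' : span ℝ (Set.range w') = ⊤ := by
    apply Submodule.map_injective_of_injective U.injective_subtype
    rw [Submodule.map_span, Submodule.map_top, Submodule.range_subtype, ← Set.range_comp]
    show span ℝ (Set.range u') = U
    exact hspan.symm
  let b : Basis (Fin k) ℝ U := Basis.mk hw.linearIndependent hsp.ge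
  let b' : Basis (Fin k) ℝ U := Basis.mk hw'.linearIndependent hsp'.ge
  have hob : Orthonormal ℝ ⇑b := by rwa [Basis.coe_mk]
  have hob' : Orthonormal ℝ ⇑b' := by rwa [Basis.coe_mk]
  refine ⟨b.toMatrix ⇑b', ?_, ?_⟩
  · have h := (b.toOrthonormalBasis hob).det_to_matrix_orthonormalBasis_real
      (b'.toOrthonormalBasis hob')
    rw [Basis.toBasis_toOrthonormalBasis, Basis.coe_toOrthonormalBasis] at h
    have : (b.toMatrix ⇑b').det = b.det ⇑b' := (Basis.det_apply _ _).symm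
    rw [this]
    rcases h with h | h <;> rw [h] <;> norm_num
  · intro j
    have h := Basis.sum_toMatrix_smul_self b (v := ⇑b') (j := j)
    have h2 := congrArg (Subtype.val) h
    rw [show b' j = w' j from by simp [b', Basis.coe_mk]] at h2
    push_cast at h2
    rw [show ((w' j : U) : E) = u' j from rfl] at h2
    rw [← h2]
    simp [b, b', Basis.coe_mk, hw_def]

private lemma hadamard {n : ℕ} (e : OrthonormalBasis (Fin n) ℝ E) (f : Fin n → E)
    (hf : ∀ i, ‖f i‖ = 1) :
    |e.toBasis.det f| ≤ 1 ∧
      (|e.toBasis.det f| = 1 → ∀ i j, i ≠ j → ⟪f i, f j⟫ = 0) := by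
  have hdim : finrank ℝ E = Fintype.card (Fin n) :=
    finrank_eq_card_basis e.toBasis
  haveI : WellFoundedLT (Fin n) := inferInstance
  set g : OrthonormalBasis (Fin n) ℝ E := InnerProductSpace.gramSchmidtOrthonormalBasis hdim f with hg
  have h1 : |e.toBasis.det f| = |∏ i, ⟪g i, f i⟫| := by
    rw [abs_det_indep e g f, InnerProductSpace.gramSchmidtOrthonormalBasis_det]
  have hgnorm : ∀ i, ‖g i‖ = 1 := fun i => g.orthonormal.1 i
  have hle : ∀ i, |⟪g i, f i⟫| ≤ 1 := fun i => by
    calc |⟪g i, f i⟫| ≤ ‖g i‖ * ‖f i‖ := abs_real_inner_le_norm _ _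
    _ = 1 := by rw [hgnorm i, hf i, mul_one]
  have habs : |e.toBasis.det f| = ∏ i, |⟪g i, f i⟫| := by
    rw [h1, Finset.abs_prod]
  constructor
  · rw [habs]
    calc ∏ i, |⟪g i, f i⟫| ≤ ∏ _i : Fin n, (1 : ℝ) :=
          Finset.prod_le_prod (fun i _ => abs_nonneg _) (fun i _ => hle i)
    _ = 1 := by simp
  · intro heq i j hij
    have hall : ∀ i, |⟪g i, f i⟫| = 1 := by
      intro i
      refine le_antisymm (hle i) ?_
      have hsplit : ∏ p, |⟪g p, f p⟫| =
          |⟪g i, f i⟫| * ∏ p ∈ Finset.univ.erase i, |⟪g p, f p⟫| :=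
        (Finset.mul_prod_erase Finset.univ _ (Finset.mem_univ i)).symm
      have hrest : ∏ p ∈ Finset.univ.erase i, |⟪g p, f p⟫| ≤ 1 :=
        Finset.prod_le_one (fun p _ => abs_nonneg _) (fun p _ => hle p)
      have hrest0 : (0:ℝ) ≤ ∏ p ∈ Finset.univ.erase i, |⟪g p, f p⟫| :=
        Finset.prod_nonneg fun p _ => abs_nonneg _
      have hpe : (1:ℝ) = |⟪g i, f i⟫| * ∏ p ∈ Finset.univ.erase i, |⟪g p, f p⟫| := by
        rw [← hsplit, ← habs, heq]
      nlinarith [abs_nonneg (⟪g i, f i⟫), hrest, hrest0, hpe]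
    have hscal : ∀ p : Fin n, ∃ r : ℝ, r ≠ 0 ∧ f p = r • g p := by
      intro p
      have hg0 : g p ≠ 0 := fun h => by simpa [h] using hgnorm p
      have hf0 : f p ≠ 0 := fun h => by simpa [h] using hf p
      have : ‖⟪g p, f p⟫‖ = ‖g p‖ * ‖f p‖ := by
        rw [Real.norm_eq_abs, hall p, hgnorm p, hf p, mul_one]
      exact norm_inner_eq_norm_iff hg0 hf0 |>.mp this
    obtain ⟨r, _, hr⟩ := hscal i
    obtain ⟨s, _, hs⟩ := hscal j
    rw [hr, hs, real_inner_smul_left, real_inner_smul_right,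
      g.orthonormal.2 hij, mul_zero, mul_zero]

end AngleAux

/-- **Well-definedness and basic properties of the angle function.**
Let `E` be a finite-dimensional real inner product space and `U, V` complementary
subspaces. For orthonormal families `u` (spanning `U`), `v` (spanning `V`) and an
orthonormal basis `e` of `E`, set `α = |det_e (u ⧺ v)|`. Then `α` is independent of
all these choices, `0 < α ≤ 1`, and `α = 1` iff `U ⊥ V`. -/
theorem angle_function_wellDefined
    {E : Type*} [NormedAddCommGroup E] [InnerProductSpace ℝ E] [FiniteDimensional ℝ E]
    (U V : Submodule ℝ E) (hUV : IsCompl U V)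
    {k m : ℕ}
    (u u' : Fin k → E) (v v' : Fin m → E)
    (hu : Orthonormal ℝ u) (hu_span : Submodule.span ℝ (Set.range u) = U)
    (hu' : Orthonormal ℝ u') (hu'_span : Submodule.span ℝ (Set.range u') = U)
    (hv : Orthonormal ℝ v) (hv_span : Submodule.span ℝ (Set.range v) = V)
    (hv' : Orthonormal ℝ v') (hv'_span : Submodule.span ℝ (Set.range v') = V)
    (e e' : OrthonormalBasis (Fin (k + m)) ℝ E) :
    |e.toBasis.det (Fin.append u v)| = |e'.toBasis.det (Fin.append u' v')| ∧
    0 < |e.toBasis.det (Fin.append u v)| ∧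
    |e.toBasis.det (Fin.append u v)| ≤ 1 ∧
    (|e.toBasis.det (Fin.append u v)| = 1 ↔ ∀ x ∈ U, ∀ y ∈ V, ⟪x, y⟫ = 0) := by
  have happ : ∀ {k' m' : ℕ} (p : Fin k' → E) (q : Fin m' → E),
      Fin.append p q = Sum.elim p q ∘ ⇑finSumFinEquiv.symm := by
    intro k' m' p q
    funext j
    induction j using Fin.addCases with
    | left a => simp [Fin.append_left, finSumFinEquiv_symm_apply_castAdd]
    | right b => simp [Fin.append_right, finSumFinEquiv_symm_apply_natAdd]
  set f := Fin.append u v with hf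
  -- basis facts
  have hli : LinearIndependent ℝ f := by
    have h0 : LinearIndependent ℝ (Sum.elim u v) :=
      hu.linearIndependent.sum_type hv.linearIndependent
        (by rw [hu_span, hv_span]; exact hUV.disjoint)
    rw [hf, happ]
    exact h0.comp _ finSumFinEquiv.symm.injective
  have hsp : Submodule.span ℝ (Set.range f) = ⊤ := by
    rw [hf, happ, Set.range_comp,
      Set.range_eq_univ.mpr finSumFinEquiv.symm.surjective, Set.image_univ,
      Set.Sum.elim_range, Submodule.span_union, hu_span, hv_span]
    exact codisjoint_iff.mp hUV.codisjoint
  have hnorm : ∀ i, ‖f i‖ = 1 := by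
    intro i
    induction i using Fin.addCases with
    | left a => simpa [hf, Fin.append_left] using hu.1 a
    | right b => simpa [hf, Fin.append_right] using hv.1 b
  obtain ⟨hle1, heqc⟩ := hadamard e f hnorm
  have hpos : 0 < |e.toBasis.det f| := by
    have hunit : IsUnit (e.toBasis.det f) := (Module.Basis.is_basis_iff_det e.toBasis).mp ⟨hli, hsp⟩
    exact abs_pos.mpr hunit.ne_zero
  -- equality case, forward
  have hfwd : |e.toBasis.det f| = 1 → ∀ x ∈ U, ∀ y ∈ V, ⟪x, y⟫ = 0 := by
    intro heq
    have hUV' : U ⟂ V := by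
      rw [← hu_span, ← hv_span, Submodule.isOrtho_span]
      rintro x ⟨a, rfl⟩ y ⟨b, rfl⟩
      have ha := a.isLt
      have hne : (Fin.castAdd m a) ≠ (Fin.natAdd k b) := by
        simp only [Fin.ne_iff_vne, Fin.coe_castAdd, Fin.coe_natAdd]
        omega
      have h0 := heqc heq _ _ hne
      simpa [hf, Fin.append_left, Fin.append_right] using h0
    exact fun x hx y hy => hUV'.inner_eq hx hy
  -- equality case, backward
  have hbwd : (∀ x ∈ U, ∀ y ∈ V, ⟪x, y⟫ = 0) → |e.toBasis.det f| = 1 := by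
    intro hortho
    have hu2 := orthonormal_iff_ite.mp hu
    have hv2 := orthonormal_iff_ite.mp hv
    have hfo : Orthonormal ℝ f := by
      rw [orthonormal_iff_ite]
      intro i j
      induction i using Fin.addCases with
      | left a =>
        induction j using Fin.addCases with
        | left b => simpa [hf, Fin.append_left, Fin.ext_iff] using hu2 a b
        | right b =>
          have ha := a.isLt
          have hne : (Fin.castAdd m a) ≠ (Fin.natAdd k b) := by
            simp only [Fin.ne_iff_vne, Fin.coe_castAdd, Fin.coe_natAdd]
            omega
          have hx : ⟪u a, v b⟫ = 0 :=
            hortho (u a) (hu_span ▸ Submodule.subset_span ⟨a, rfl⟩)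
              (v b) (hv_span ▸ Submodule.subset_span ⟨b, rfl⟩)
          simp [hf, Fin.append_left, Fin.append_right, hne, hx]
      | right a =>
        induction j using Fin.addCases with
        | left b =>
          have hb := b.isLt
          have hne : (Fin.natAdd k a) ≠ (Fin.castAdd m b) := by
            simp only [Fin.ne_iff_vne, Fin.coe_castAdd, Fin.coe_natAdd]
            omega
          have hx : ⟪u b, v a⟫ = 0 :=
            hortho (u b) (hu_span ▸ Submodule.subset_span ⟨b, rfl⟩)
              (v a) (hv_span ▸ Submodule.subset_span ⟨a, rfl⟩)
          have hx' : ⟪v a, u b⟫ = 0 := by rw [real_inner_comm]; exact hx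
          simp [hf, Fin.append_left, Fin.append_right, hne, hx']
        | right b => simpa [hf, Fin.append_right, Fin.ext_iff] using hv2 a b
    let B : OrthonormalBasis (Fin (k + m)) ℝ E :=
      (Basis.mk hli hsp.ge).toOrthonormalBasis (by rwa [Basis.coe_mk])
    have hcoe : ⇑B = f := by
      rw [show ⇑B = ⇑(Basis.mk hli hsp.ge) from Basis.coe_toOrthonormalBasis _ _, Basis.coe_mk]
    have h := e.det_to_matrix_orthonormalBasis_real B
    rw [hcoe] at h
    rcases h with h | h <;> rw [h] <;> norm_num
  -- independence of all choices
  obtain ⟨A, hA, hAe⟩ := exists_transition u u' hu hu' (hu_span.trans hu'_span.symm)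
  obtain ⟨Bm, hBm, hBe⟩ := exists_transition v v' hv hv' (hv_span.trans hv'_span.symm)
  set M : Matrix (Fin (k + m)) (Fin (k + m)) ℝ :=
    (Matrix.fromBlocks A 0 0 Bm).submatrix ⇑finSumFinEquiv.symm ⇑finSumFinEquiv.symm with hM
  have hMdet : |M.det| = 1 := by
    rw [hM, Matrix.det_submatrix_equiv_self, Matrix.det_fromBlocks_zero₂₁, abs_mul, hA, hBm,
      mul_one]
  have hcol : Fin.append u' v' = fun j => ∑ i, M i j • f i := by
    funext j
    have hsum : ∑ i, M i j • f i =
        ∑ p : Fin k ⊕ Fin m, M (finSumFinEquiv p) j • f (finSumFinEquiv p) :=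
      (Fintype.sum_equiv finSumFinEquiv _ _ (fun p => rfl)).symm
    rw [hsum, Fintype.sum_sum_type]
    induction j using Fin.addCases with
    | left a =>
      simp only [hM, hf, Matrix.submatrix_apply, Equiv.symm_apply_apply,
        finSumFinEquiv_symm_apply_castAdd, finSumFinEquiv_symm_apply_natAdd,
        finSumFinEquiv_apply_left, finSumFinEquiv_apply_right,
        Matrix.fromBlocks_apply₁₁, Matrix.fromBlocks_apply₂₁, Fin.append_left, Fin.append_right,
        Matrix.zero_apply, zero_smul, Finset.sum_const_zero, add_zero]
      exact hAe a
    | right b =>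
      simp only [hM, hf, Matrix.submatrix_apply, Equiv.symm_apply_apply,
        finSumFinEquiv_symm_apply_castAdd, finSumFinEquiv_symm_apply_natAdd,
        finSumFinEquiv_apply_left, finSumFinEquiv_apply_right,
        Matrix.fromBlocks_apply₁₂, Matrix.fromBlocks_apply₂₂, Fin.append_left, Fin.append_right,
        Matrix.zero_apply, zero_smul, Finset.sum_const_zero, zero_add]
      exact hBe b
  have hindep : |e.toBasis.det f| = |e'.toBasis.det (Fin.append u' v')| := by
    rw [← abs_det_indep e e' (Fin.append u' v'), hcol, det_family_mul, abs_mul, hMdet, mul_one]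
  exact ⟨hindep, hpos, hle1, ⟨hfwd, hbwd⟩⟩
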